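/- Variance under optimal proposal never exceeds variance under the original distribution: with p₂*(z) = p₁(z)|f(z)|/Σ p₁|f|, we have Var_{z∼P₂*}[(p₁(z)/p₂*(z)) f(z)] ≤ Var_{z∼P₁}[f(z)], with equality iff |f| is P₁-almost surely constant. -/

import Mathlib

/-- The variance under the optimal proposal never exceeds the variance under the
original distribution, with equality iff `|f|` is `P₁`-a.s. constant. -/
theorem optimal_proposal_beats_original {Z : Type*} [Fintype Z]
    (p₁ : Z → ℝ) (f : Z → ℝ)
    (h₁nonneg : ∀ z, 0 ≤ p₁ z) (h₁sum : ∑ z, p₁ z = 1)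
    (hμ : 0 < ∑ z, p₁ z * |f z|) :
    (∑ z, (p₁ z * |f z| / ∑ z', p₁ z' * |f z'|) *
        (p₁ z / (p₁ z * |f z| / ∑ z', p₁ z' * |f z'|) * f z) ^ 2
      - (∑ z, (p₁ z * |f z| / ∑ z', p₁ z' * |f z'|) *
          (p₁ z / (p₁ z * |f z| / ∑ z', p₁ z' * |f z'|) * f z)) ^ 2
      ≤ ∑ z, p₁ z * f z ^ 2 - (∑ z, p₁ z * f z) ^ 2) ∧
    ((∑ z, (p₁ z * |f z| / ∑ z', p₁ z' * |f z'|) *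
        (p₁ z / (p₁ z * |f z| / ∑ z', p₁ z' * |f z'|) * f z) ^ 2
      - (∑ z, (p₁ z * |f z| / ∑ z', p₁ z' * |f z'|) *
          (p₁ z / (p₁ z * |f z| / ∑ z', p₁ z' * |f z'|) * f z)) ^ 2
      = ∑ z, p₁ z * f z ^ 2 - (∑ z, p₁ z * f z) ^ 2)
      ↔ ∃ c : ℝ, ∀ z, 0 < p₁ z → |f z| = c) := by
  set S := ∑ z', p₁ z' * |f z'| with hS
  have hS0 : S ≠ 0 := ne_of_gt hμ
  have hA : ∀ z, (p₁ z * |f z| / S) * (p₁ z / (p₁ z * |f z| / S) * f z) ^ 2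
      = S * (p₁ z * |f z|) := by
    intro z
    rcases eq_or_ne (p₁ z * |f z|) 0 with h | h
    · simp [h]
    · have ha : p₁ z ≠ 0 := fun ha => h (by simp [ha])
      have hb : |f z| ≠ 0 := fun hb => h (by simp [hb])
      field_simp
      linear_combination -(1:ℝ) * sq_abs (f z)
  have hB : ∀ z, (p₁ z * |f z| / S) * (p₁ z / (p₁ z * |f z| / S) * f z)
      = p₁ z * f z := by
    intro z
    rcases eq_or_ne (p₁ z * |f z|) 0 with h | h
    · rcases mul_eq_zero.mp h with h' | h'
      · simp [h', h]
      · simp [abs_eq_zero.mp h', h]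
    · have ha : p₁ z ≠ 0 := fun ha => h (by simp [ha])
      have hb : |f z| ≠ 0 := fun hb => h (by simp [hb])
      field_simp
  rw [Finset.sum_congr rfl (fun z _ => hA z), Finset.sum_congr rfl (fun z _ => hB z),
    ← Finset.mul_sum, ← hS]
  have expand : ∑ z, p₁ z * (|f z| - S) ^ 2 = (∑ z, p₁ z * f z ^ 2) - S * S := by
    have hz : ∀ z, p₁ z * (|f z| - S) ^ 2
        = p₁ z * f z ^ 2 - 2 * S * (p₁ z * |f z|) + S ^ 2 * p₁ z := by
      intro z
      have : (|f z| - S) ^ 2 = |f z| ^ 2 - 2 * S * |f z| + S ^ 2 := by ring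
      rw [this, sq_abs]; ring
    rw [Finset.sum_congr rfl (fun z _ => hz z)]
    rw [Finset.sum_add_distrib, Finset.sum_sub_distrib, ← Finset.mul_sum, ← Finset.mul_sum,
      ← hS, h₁sum]
    ring
  have hnonneg : ∀ z ∈ Finset.univ, 0 ≤ p₁ z * (|f z| - S) ^ 2 := fun z _ =>
    mul_nonneg (h₁nonneg z) (sq_nonneg _)
  constructor
  · have : 0 ≤ ∑ z, p₁ z * (|f z| - S) ^ 2 := Finset.sum_nonneg hnonneg
    nlinarith [expand]
  · constructor
    · intro heq
      refine ⟨S, fun z hz => ?_⟩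
      have hsum0 : ∑ z, p₁ z * (|f z| - S) ^ 2 = 0 := by nlinarith [expand]
      have := (Finset.sum_eq_zero_iff_of_nonneg hnonneg).mp hsum0 z (Finset.mem_univ z)
      have h2 : (|f z| - S) ^ 2 = 0 := by
        rcases mul_eq_zero.mp this with h' | h'
        · exact absurd h' (ne_of_gt hz)
        · exact h'
      have := pow_eq_zero_iff (n := 2) (by norm_num) |>.mp h2
      linarith [sub_eq_zero.mp this]
    · rintro ⟨c, hc⟩
      have hcS : S = c := by
        rw [hS]
        have : ∀ z, p₁ z * |f z| = p₁ z * c := by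
          intro z
          rcases (h₁nonneg z).lt_or_eq with h | h
          · rw [hc z h]
          · rw [← h]; ring
        rw [Finset.sum_congr rfl (fun z _ => this z), ← Finset.sum_mul, h₁sum, one_mul]
      have hsum0 : ∑ z, p₁ z * (|f z| - S) ^ 2 = 0 := by
        apply Finset.sum_eq_zero
        intro z _
        rcases (h₁nonneg z).lt_or_eq with h | h
        · rw [hc z h, hcS]; ring
        · rw [← h]; ring
      nlinarith [expand]
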